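/- Let S and T be monic polynomials in k[X] over a nonzero commutative ring k. If the k-algebra k[X]/(ST) is isomorphic to a finite power k^n of k, then the k-algebra k[X]/(S) is isomorphic to k^deg(S). -/

import Mathlib

open Polynomial

noncomputable section
variable {k : Type*} [CommRing k]

/-- AlgEquiv between subsingleton algebras -/
def subsingAlgEquiv {A B : Type*} [Semiring A] [Semiring B] [Algebra k A] [Algebra k B]
    [Subsingleton A] [Subsingleton B] : A ≃ₐ[k] B where
  toFun _ := 1
  invFun _ := 1
  left_inv _ := Subsingleton.elim _ _
  right_inv _ := Subsingleton.elim _ _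
  map_mul' _ _ := Subsingleton.elim _ _
  map_add' _ _ := Subsingleton.elim _ _
  commutes' _ := Subsingleton.elim _ _

def algEquivProdCongr {A B A' B' : Type*} [Semiring A] [Semiring B] [Semiring A'] [Semiring B']
    [Algebra k A] [Algebra k B] [Algebra k A'] [Algebra k B']
    (e₁ : A ≃ₐ[k] A') (e₂ : B ≃ₐ[k] B') : (A × B) ≃ₐ[k] (A' × B') :=
  AlgEquiv.ofRingEquiv (f := RingEquiv.prodCongr e₁.toRingEquiv e₂.toRingEquiv)
    (fun r => by simp [RingEquiv.prodCongr, Prod.ext_iff, Algebra.algebraMap_eq_smul_one])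

def piFinSuccAlgEquiv (d : ℕ) : (Fin (d+1) → k) ≃ₐ[k] k × (Fin d → k) where
  toFun f := (f 0, f ∘ Fin.succ)
  invFun p := Fin.cases p.1 p.2
  left_inv f := by funext i; cases i using Fin.cases <;> simp
  right_inv p := by ext <;> simp
  map_mul' f g := rfl
  map_add' f g := rfl
  commutes' r := by
    show ((algebraMap k (Fin (d+1) → k)) r 0, _) = _
    ext <;> simp [Algebra.algebraMap_eq_smul_one] <;> rfl


lemma copLinear (b : k) (S₁ : k[X]) (hu : IsUnit (S₁.eval b)) :
    IsCoprime (Ideal.span {X - C b} : Ideal k[X]) (Ideal.span {S₁}) := by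
  have hdvd : (X - C b) ∣ (S₁ - C (S₁.eval b)) := by
    rw [dvd_iff_isRoot]; simp [IsRoot]
  obtain ⟨Q, hQ⟩ := hdvd
  obtain ⟨u, hu'⟩ := hu
  rw [Ideal.isCoprime_span_singleton_iff]
  refine ⟨-(C ((u⁻¹ : kˣ) : k)) * Q, C ((u⁻¹ : kˣ) : k), ?_⟩
  have h2 : (C ((u⁻¹ : kˣ) : k)) * C (S₁.eval b) = 1 := by
    rw [← C_mul, ← hu']; simp
  linear_combination (C ((u⁻¹ : kˣ) : k)) * hQ + h2

/-- CRT step: split off a linear factor. -/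
def splitLinearAlgEquiv (b : k) (S₁ : k[X]) (hu : IsUnit (S₁.eval b)) :
    (k[X] ⧸ Ideal.span {(X - C b) * S₁}) ≃ₐ[k] k × (k[X] ⧸ Ideal.span {S₁}) := by
  have cop := copLinear b S₁ hu
  have hspan : Ideal.span {(X - C b) * S₁} = Ideal.span {X - C b} * Ideal.span {S₁} := by
    rw [Ideal.span_singleton_mul_span_singleton]
  refine AlgEquiv.trans (AlgEquiv.ofRingEquiv (f :=
    ((Ideal.quotEquivOfEq hspan).trans
      (Ideal.quotientMulEquivQuotientProd _ _ cop)) ) ?_) ?_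
  · intro r
    have : (algebraMap k (k[X] ⧸ Ideal.span {(X - C b) * S₁})) r
        = Ideal.Quotient.mk _ (C r) := rfl
    rw [this]
    ext
    · simp [Ideal.quotEquivOfEq_mk]; rfl
    · simp [Ideal.quotEquivOfEq_mk]; rfl
  · exact algEquivProdCongr (Polynomial.quotientSpanXSubCAlgEquiv b) AlgEquiv.refl

lemma exists_simple_root [Nontrivial k] (n : ℕ) (a : ℕ → k) (S T : k[X])
    (hS : S.Monic) (hd : 0 < S.natDegree)
    (hST : S * T = ∏ i ∈ Finset.range n, (X - C (a i)))
    (hunit : ∀ i ∈ Finset.range n, ∀ j ∈ Finset.range n, i ≠ j → IsUnit (a i - a j))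
    (hint : ∀ y : ℕ → k, ∃ P : k[X], ∀ i ∈ Finset.range n, P.eval (a i) = y i) :
    ∃ b : k, S.eval b = 0 ∧ IsUnit (S.derivative.eval b) := by
  classical
  obtain ⟨s, hsdef⟩ : ∃ s : ℕ → k, s = fun i => S.eval (a i) := ⟨_, rfl⟩
  obtain ⟨t, htdef⟩ : ∃ t : ℕ → k, t = fun i => T.eval (a i) := ⟨_, rfl⟩
  have hsa : ∀ i, S.eval (a i) = s i := fun i => by rw [hsdef]
  have hta : ∀ i, T.eval (a i) = t i := fun i => by rw [htdef]
  have hst0 : ∀ i ∈ Finset.range n, s i * t i = 0 := by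
    intro i hi
    have h1 := congrArg (Polynomial.eval (a i)) hST
    rw [eval_mul, eval_prod] at h1
    rw [hsdef, htdef]
    simp only
    rw [h1]
    refine Finset.prod_eq_zero hi ?_
    simp
  obtain ⟨u, hudef⟩ : ∃ u : ℕ → k, u = fun i => ∏ j ∈ (Finset.range n).erase i, (a i - a j) := ⟨_, rfl⟩
  have huu : ∀ i ∈ Finset.range n, IsUnit (u i) := by
    intro i hi
    rw [hudef]
    refine Finset.prod_induction _ IsUnit (fun _ _ => IsUnit.mul) isUnit_one ?_
    intro j hj
    exact hunit i hi j (Finset.mem_of_mem_erase hj) (Ne.symm (Finset.ne_of_mem_erase hj))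
  obtain ⟨w, hwdef⟩ : ∃ w : ℕ → k, w = fun i => if h : IsUnit (u i) then ((h.unit⁻¹ : kˣ) : k) else 0 := ⟨_, rfl⟩
  have hwu : ∀ i ∈ Finset.range n, w i * u i = 1 := by
    intro i hi
    rw [hwdef]
    simp only
    rw [dif_pos (huu i hi)]
    exact (huu i hi).val_inv_mul
  have hder : ∀ i ∈ Finset.range n,
      S.derivative.eval (a i) * t i + s i * T.derivative.eval (a i) = u i := by
    intro i hi
    have hfac : S * T = (X - C (a i)) * ∏ j ∈ (Finset.range n).erase i, (X - C (a j)) := by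
      rw [hST]
      exact (Finset.mul_prod_erase _ _ hi).symm
    have h2 := congrArg Polynomial.derivative hfac
    rw [derivative_mul, derivative_mul, derivative_sub, derivative_X, derivative_C, sub_zero,
      one_mul] at h2
    have h3 := congrArg (Polynomial.eval (a i)) h2
    rw [eval_add, eval_add, eval_mul, eval_mul, eval_mul, eval_sub, eval_X, eval_C, sub_self,
      zero_mul, add_zero, eval_prod] at h3
    rw [hsdef, htdef, hudef]
    simp only
    rw [h3]
    exact Finset.prod_congr rfl fun j _ => by simp
  obtain ⟨e, hedef⟩ : ∃ e : ℕ → k, e = fun i => w i * T.derivative.eval (a i) * s i := ⟨_, rfl⟩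
  have hcomb : ∀ i ∈ Finset.range n, w i * S.derivative.eval (a i) * t i + e i = 1 := by
    intro i hi
    rw [hedef]
    simp only
    linear_combination (w i) * (hder i hi) + (hwu i hi)
  have hes : ∀ i ∈ Finset.range n, e i * s i = s i := by
    intro i hi
    linear_combination (s i) * hcomb i hi - (w i * S.derivative.eval (a i)) * hst0 i hi
  have hee : ∀ i ∈ Finset.range n, e i * e i = e i := by
    intro i hi
    have h1 := hes i hi
    rw [hedef]
    rw [hedef] at h1
    simp only at h1 ⊢
    linear_combination (w i * T.derivative.eval (a i)) * h1
  -- products of idempotents are idempotent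
  have hPP : ∀ m, m ≤ n → (∏ j ∈ Finset.range m, e j) * (∏ j ∈ Finset.range m, e j)
      = ∏ j ∈ Finset.range m, e j := by
    intro m hm
    rw [← Finset.prod_mul_distrib]
    exact Finset.prod_congr rfl fun j hj =>
      hee j (Finset.mem_range.mpr (lt_of_lt_of_le (Finset.mem_range.mp hj) hm))
  obtain ⟨d, hddef⟩ : ∃ d : ℕ → k, d = fun i => (1 - e i) * ∏ j ∈ Finset.range i, e j := ⟨_, rfl⟩
  have htel : ∀ m, ∑ i ∈ Finset.range m, d i = 1 - ∏ i ∈ Finset.range m, e i := by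
    intro m
    induction m with
    | zero => simp
    | succ m ih =>
      rw [Finset.sum_range_succ, Finset.prod_range_succ, ih, hddef]
      ring
  have hprod0 : ∏ i ∈ Finset.range n, e i = 0 := by
    by_contra hc
    obtain ⟨Y, hY⟩ := hint (fun i => w i * T.derivative.eval (a i) * ∏ j ∈ (Finset.range n).erase i, e j)
    have hdiv : ∀ i ∈ Finset.range n, (C (∏ i ∈ Finset.range n, e i) - Y * S).eval (a i) = 0 := by
      intro i hi
      rw [eval_sub, eval_C, eval_mul, hY i hi, hsa i]
      rw [← Finset.mul_prod_erase _ _ hi, hedef]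
      simp only
      ring
    have hdvd2 : (∏ i ∈ Finset.range n, (X - C (a i))) ∣ (C (∏ i ∈ Finset.range n, e i) - Y * S) := by
      apply Finset.prod_dvd_of_coprime
      · intro i hi j hj hij
        simp only [Finset.mem_coe] at hi hj
        obtain ⟨v, hv⟩ := hunit i hi j hj hij
        refine ⟨-C ((v⁻¹ : kˣ) : k), C ((v⁻¹ : kˣ) : k), ?_⟩
        have h1C : C ((v⁻¹ : kˣ) : k) * (C (a i) - C (a j)) = 1 := by
          rw [← map_sub, ← map_mul, ← hv]
          norm_cast
          rw [inv_mul_cancel]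
          exact map_one C
        simp only [Function.onFun]
        linear_combination h1C
      · intro i hi
        rw [dvd_iff_isRoot]
        exact hdiv i hi
    rw [← hST] at hdvd2
    obtain ⟨W, hW⟩ := hdvd2
    have hSdvd : S ∣ C (∏ i ∈ Finset.range n, e i) := ⟨Y + T * W, by linear_combination hW⟩
    obtain ⟨W', hW'⟩ := hSdvd
    have hW'0 : W' ≠ 0 := by
      intro h0
      rw [h0, mul_zero] at hW'
      exact hc (by rwa [C_eq_zero] at hW')
    have hnd : (C (∏ i ∈ Finset.range n, e i)).natDegree = S.natDegree + W'.natDegree := by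
      rw [hW']
      exact natDegree_mul' (by rw [hS.leadingCoeff, one_mul]; exact leadingCoeff_ne_zero.mpr hW'0)
    rw [natDegree_C] at hnd
    omega
  have hsum1 : ∑ i ∈ Finset.range n, d i = 1 := by rw [htel n, hprod0, sub_zero]
  have hde : ∀ i ∈ Finset.range n, d i * e i = 0 := by
    intro i hi
    rw [hddef]
    simp only
    linear_combination (-(∏ j ∈ Finset.range i, e j)) * hee i hi
  have hds : ∀ i ∈ Finset.range n, d i * s i = 0 := by
    intro i hi
    rw [hddef]
    simp only
    linear_combination (-(∏ j ∈ Finset.range i, e j)) * hes i hi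
  have hdd : ∀ i ∈ Finset.range n, d i * d i = d i := by
    intro i hi
    have hP := hPP i (le_of_lt (Finset.mem_range.mp hi))
    rw [hddef]
    simp only
    linear_combination ((1 - e i) * (1 - e i)) * hP + (∏ j ∈ Finset.range i, e j) * hee i hi
  have horth : ∀ i ∈ Finset.range n, ∀ j ∈ Finset.range n, i ≠ j → d i * d j = 0 := by
    have key : ∀ i j, i < j → j < n → d i * d j = 0 := by
      intro i j hij hjn
      have hmem : i ∈ Finset.range j := Finset.mem_range.mpr hij
      have hsplit : ∏ l ∈ Finset.range j, e l = e i * ∏ l ∈ (Finset.range j).erase i, e l :=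
        (Finset.mul_prod_erase _ _ hmem).symm
      have hin : i ∈ Finset.range n := Finset.mem_range.mpr (lt_trans hij hjn)
      rw [hddef]
      simp only
      rw [hsplit]
      linear_combination (-((∏ l ∈ Finset.range i, e l) * (1 - e j) * (∏ l ∈ (Finset.range j).erase i, e l))) * hee i hin
    intro i hi j hj hij
    rcases lt_or_gt_of_ne hij with h | h
    · exact key i j h (Finset.mem_range.mp hj)
    · rw [mul_comm]; exact key j i h (Finset.mem_range.mp hi)
  obtain ⟨b, hbdef⟩ : ∃ b : k, b = ∑ i ∈ Finset.range n, d i * a i := ⟨_, rfl⟩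
  have hdb : ∀ i ∈ Finset.range n, d i * b = d i * a i := by
    intro i hi
    rw [hbdef, Finset.mul_sum]
    rw [Finset.sum_eq_single i]
    · rw [← mul_assoc, hdd i hi]
    · intro j hj hji
      rw [← mul_assoc, horth i hi j hj (Ne.symm hji), zero_mul]
    · intro hni; exact absurd hi hni
  have hPb : ∀ P : k[X], ∀ i ∈ Finset.range n, d i * P.eval b = d i * P.eval (a i) := by
    intro P i hi
    obtain ⟨q, hq⟩ := sub_dvd_eval_sub b (a i) P
    have hz : d i * (b - a i) = 0 := by
      rw [mul_sub, hdb i hi, sub_self]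
    have : d i * (P.eval b - P.eval (a i)) = 0 := by
      rw [hq, ← mul_assoc, hz, zero_mul]
    linear_combination this
  have hevalb : ∀ P : k[X], P.eval b = ∑ i ∈ Finset.range n, d i * P.eval (a i) := by
    intro P
    calc P.eval b = (∑ i ∈ Finset.range n, d i) * P.eval b := by rw [hsum1, one_mul]
    _ = ∑ i ∈ Finset.range n, d i * P.eval b := Finset.sum_mul _ _ _
    _ = ∑ i ∈ Finset.range n, d i * P.eval (a i) := Finset.sum_congr rfl fun i hi => hPb P i hi
  have hSb : S.eval b = 0 := by
    rw [hevalb S]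
    exact Finset.sum_eq_zero fun i hi => by rw [hsa i]; exact hds i hi
  obtain ⟨v, hvdef⟩ : ∃ v : k, v = ∑ i ∈ Finset.range n, d i * (w i * t i) := ⟨_, rfl⟩
  have hdv : ∀ i ∈ Finset.range n, d i * v = d i * (w i * t i) := by
    intro i hi
    rw [hvdef, Finset.mul_sum]
    rw [Finset.sum_eq_single i]
    · rw [← mul_assoc, hdd i hi]
    · intro j hj hji
      rw [← mul_assoc, horth i hi j hj (Ne.symm hji), zero_mul]
    · intro hni; exact absurd hi hni
  have hmain : S.derivative.eval b * v = 1 := by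
    rw [hevalb S.derivative, Finset.sum_mul]
    have : ∀ i ∈ Finset.range n, d i * S.derivative.eval (a i) * v = d i := by
      intro i hi
      rw [mul_comm (d i) (S.derivative.eval (a i)), mul_assoc, hdv i hi]
      have h1 := hcomb i hi
      have h2 := hds i hi
      linear_combination (d i) * h1 - hde i hi
    rw [Finset.sum_congr rfl this]
    exact hsum1
  exact ⟨b, hSb, IsUnit.of_mul_eq_one v hmain⟩

lemma key_induction [Nontrivial k] (n : ℕ) (a : ℕ → k)
    (hunit : ∀ i ∈ Finset.range n, ∀ j ∈ Finset.range n, i ≠ j → IsUnit (a i - a j))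
    (hint : ∀ y : ℕ → k, ∃ P : k[X], ∀ i ∈ Finset.range n, P.eval (a i) = y i) :
    ∀ (dg : ℕ) (S T : k[X]), S.Monic → T.Monic → S.natDegree = dg →
      S * T = ∏ i ∈ Finset.range n, (X - C (a i)) →
      Nonempty ((k[X] ⧸ Ideal.span {S}) ≃ₐ[k] (Fin dg → k)) := by
  intro dg
  induction dg with
  | zero =>
    intro S T hS hT hdeg hST
    have hS1 : S = 1 := hS.natDegree_eq_zero.mp hdeg
    subst hS1
    haveI : Subsingleton (k[X] ⧸ Ideal.span {(1:k[X])}) := by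
      rw [Ideal.Quotient.subsingleton_iff]
      exact Ideal.span_singleton_one
    exact ⟨subsingAlgEquiv⟩
  | succ dg ih =>
    intro S T hS hT hdeg hST
    obtain ⟨b, hb0, hbu⟩ := exists_simple_root n a S T hS (by omega) hST hunit hint
    obtain ⟨S₁, hS₁⟩ := (dvd_iff_isRoot.mpr hb0 : (X - C b) ∣ S)
    have hS₁m : S₁.Monic := (monic_X_sub_C b).of_mul_monic_left (hS₁ ▸ hS)
    have hder : S.derivative.eval b = S₁.eval b := by
      rw [hS₁, derivative_mul, derivative_sub, derivative_X, derivative_C, sub_zero, one_mul]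
      simp
    have hu1 : IsUnit (S₁.eval b) := hder ▸ hbu
    have hdeg₁ : S₁.natDegree = dg := by
      have h2 : ((X - C b) * S₁).natDegree = dg + 1 := by rw [← hS₁]; exact hdeg
      rw [(monic_X_sub_C b).natDegree_mul hS₁m, natDegree_X_sub_C] at h2
      omega
    obtain ⟨E⟩ := ih S₁ ((X - C b) * T) hS₁m ((monic_X_sub_C b).mul hT) hdeg₁
      (by rw [← hST, hS₁]; ring)
    have e1 : (k[X] ⧸ Ideal.span {S}) ≃ₐ[k] k × (k[X] ⧸ Ideal.span {S₁}) := by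
      rw [hS₁]
      exact splitLinearAlgEquiv b S₁ hu1
    exact ⟨(e1.trans (algEquivProdCongr AlgEquiv.refl E)).trans (piFinSuccAlgEquiv dg).symm⟩

end

theorem stmt_8 {k : Type*} [CommRing k] [Nontrivial k] (S T : Polynomial k)
    (hS : S.Monic) (hT : T.Monic)
    (h : ∃ n : ℕ, Nonempty ((Polynomial k ⧸ Ideal.span {S * T}) ≃ₐ[k] (Fin n → k))) :
    Nonempty ((Polynomial k ⧸ Ideal.span {S}) ≃ₐ[k] (Fin S.natDegree → k)) := by
  classical
  obtain ⟨n, ⟨φ⟩⟩ := h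
  set A : Fin n → k := φ (Ideal.Quotient.mk _ X) with hA
  have hcomp : ∀ P : k[X], ∀ i : Fin n, φ (Ideal.Quotient.mk _ P) i = P.eval (A i) := by
    intro P i
    have hψ : (Pi.evalAlgHom k (fun _ : Fin n => k) i).comp
        (φ.toAlgHom.comp (Ideal.Quotient.mkₐ k (Ideal.span {S * T}))) = aeval (A i) := by
      apply Polynomial.algHom_ext
      simp [Pi.evalAlgHom, Ideal.Quotient.mkₐ_eq_mk, hA]
      rfl
    have := congrArg (fun f : k[X] →ₐ[k] k => f P) hψ
    simp only [AlgHom.comp_apply] at this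
    rw [← coe_aeval_eq_eval, ← this]
    rfl
  -- define a : ℕ → k
  set a : ℕ → k := fun m => if h : m < n then A ⟨m, h⟩ else 0 with hadef
  have haA : ∀ i, ∀ hi : i ∈ Finset.range n, a i = A ⟨i, Finset.mem_range.mp hi⟩ := by
    intro i hi
    rw [hadef]
    simp only
    rw [dif_pos (Finset.mem_range.mp hi)]
  have hint : ∀ y : ℕ → k, ∃ P : k[X], ∀ i ∈ Finset.range n, P.eval (a i) = y i := by
    intro y
    obtain ⟨q, hq⟩ := φ.surjective (fun i : Fin n => y i.val)
    obtain ⟨P, hP⟩ := Ideal.Quotient.mk_surjective q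
    refine ⟨P, fun i hi => ?_⟩
    have := hcomp P ⟨i, Finset.mem_range.mp hi⟩
    rw [hP, hq] at this
    rw [haA i hi, ← this]
  have hunit : ∀ i ∈ Finset.range n, ∀ j ∈ Finset.range n, i ≠ j → IsUnit (a i - a j) := by
    intro i hi j hj hij
    obtain ⟨P, hP⟩ := hint (fun m => if m = i then 1 else 0)
    have h1 : P.eval (a i) = 1 := by rw [hP i hi]; simp
    have h2 : P.eval (a j) = 0 := by rw [hP j hj]; simp [Ne.symm hij]
    have hdvd : (a i - a j) ∣ (P.eval (a i) - P.eval (a j)) := sub_dvd_eval_sub _ _ _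
    rw [h1, h2, sub_zero] at hdvd
    exact isUnit_of_dvd_one hdvd
  -- n = natDegree (S*T)
  have hfr1 : Module.finrank k (k[X] ⧸ Ideal.span {S * T}) = (S * T).natDegree := by
    exact (AdjoinRoot.powerBasis' (hS.mul hT)).finrank.trans rfl
  have hfr2 : Module.finrank k (k[X] ⧸ Ideal.span {S * T}) = n := by
    rw [φ.toLinearEquiv.finrank_eq, Module.finrank_pi, Fintype.card_fin]
  have hn : (S * T).natDegree = n := by rw [← hfr1, hfr2]
  -- product formula
  have hprod : S * T = ∏ i ∈ Finset.range n, (X - C (a i)) := by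
    set Q : k[X] := ∏ i ∈ Finset.range n, (X - C (a i)) with hQ
    have hQm : Q.Monic := monic_prod_of_monic _ _ fun i _ => monic_X_sub_C _
    have hQd : Q.natDegree = n := by
      rw [hQ, natDegree_prod_of_monic _ _ fun i _ => monic_X_sub_C _]
      simp [natDegree_X_sub_C]
    have hmkD : Ideal.Quotient.mk (Ideal.span {S * T}) (Q - S * T) = 0 := by
      have : φ (Ideal.Quotient.mk (Ideal.span {S * T}) (Q - S * T)) = 0 := by
        funext i
        rw [hcomp]
        have hQe : Q.eval (A i) = 0 := by
          rw [hQ, eval_prod]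
          refine Finset.prod_eq_zero (Finset.mem_range.mpr i.isLt) ?_
          rw [haA i.val (Finset.mem_range.mpr i.isLt)]
          simp
        rw [eval_sub, hQe]
        have : Ideal.Quotient.mk (Ideal.span {S * T}) (S * T) = 0 := by
          rw [Ideal.Quotient.eq_zero_iff_mem]
          exact Ideal.mem_span_singleton_self _
        have h4 := hcomp (S * T) i
        rw [this, map_zero] at h4
        simp only [Pi.zero_apply] at h4
        rw [← h4]
        simp
      exact φ.injective (by rw [this, map_zero])
    rw [Ideal.Quotient.eq_zero_iff_mem, Ideal.mem_span_singleton] at hmkD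
    by_cases hD : Q - S * T = 0
    · linear_combination -hD
    · exfalso
      obtain ⟨W, hW⟩ := hmkD
      have hW0 : W ≠ 0 := by rintro rfl; rw [mul_zero] at hW; exact hD hW
      have hnd : (Q - S * T).natDegree = (S * T).natDegree + W.natDegree := by
        rw [hW]
        exact natDegree_mul' (by rw [(hS.mul hT).leadingCoeff, one_mul]; exact leadingCoeff_ne_zero.mpr hW0)
      have hdegQ : Q.degree = (S * T).degree := by
        rw [degree_eq_natDegree hQm.ne_zero, degree_eq_natDegree (hS.mul hT).ne_zero, hQd, hn]
      have h5 := degree_sub_lt hdegQ hQm.ne_zero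
        (by rw [hQm.leadingCoeff, (hS.mul hT).leadingCoeff])
      rw [degree_eq_natDegree hQm.ne_zero, hQd] at h5
      have hlt : (Q - S * T).natDegree < n := by
        rw [natDegree_lt_iff_degree_lt hD]
        exact_mod_cast h5
      omega
  obtain ⟨E⟩ := key_induction n a hunit hint S.natDegree S T hS hT rfl hprod
  exact ⟨E⟩
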